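/- For the KNN valuation function u with parameter k ≤ n, the Shapley–Taylor interaction between the two farthest training points equals φ_{n-1,n}(u) = -[2(n-k)/(n(n-1))]·u(n), where u(n) = 1[y_n = y_test]/k. -/

import Mathlib

open Finset

lemma sort_union_max (S : Finset ℕ) (a : ℕ) (h : ∀ x ∈ S, x < a) :
    (S ∪ {a}).sort (· ≤ ·) = S.sort (· ≤ ·) ++ [a] := by
  have ha : a ∉ S := fun hx => lt_irrefl a (h a hx)
  have hins : S ∪ {a} = insert a S := by ext x; simp [or_comm]
  have hperm : List.Perm ((S ∪ {a}).sort (· ≤ ·)) (S.sort (· ≤ ·) ++ [a]) := by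
    rw [← Multiset.coe_eq_coe, ← Multiset.coe_add]
    rw [Finset.sort_eq, Finset.sort_eq, hins, Finset.insert_val_of_notMem ha]
    rw [add_comm]; rfl
  have hs2 : List.Pairwise (· ≤ ·) (S.sort (· ≤ ·) ++ [a]) := by
    rw [List.pairwise_append]
    refine ⟨S.pairwise_sort _, List.pairwise_singleton _ a, ?_⟩
    intro x hx y hy
    simp at hy; subst hy
    exact le_of_lt (h x ((Finset.mem_sort _).1 hx))
  exact List.Perm.eq_of_pairwise' ((S ∪ {a}).pairwise_sort _) hs2 hperm

/-- KNN valuation function: fraction (out of k) of label matches among the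
min(k,|S|) smallest-index (closest) elements of S. `m i` says whether train
point i's label matches the test label. -/
noncomputable def knnVal (k : ℕ) (m : ℕ → Bool) (S : Finset ℕ) : ℝ :=
  (((S.sort (· ≤ ·)).take k).countP m : ℝ) / k

/-- Discrete second difference of a set function. -/
noncomputable def secondDiff (u : Finset ℕ → ℝ) (S : Finset ℕ) (i j : ℕ) : ℝ :=
  u (S ∪ {i, j}) - u (S ∪ {i}) - u (S ∪ {j}) + u S

/-- Shapley–Taylor pair-interaction index on N = {1,…,n}. -/
noncomputable def sti (n : ℕ) (u : Finset ℕ → ℝ) (i j : ℕ) : ℝ :=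
  (2 / n) * ∑ S ∈ ((Finset.Icc 1 n) \ {i, j}).powerset,
    (1 / ((n - 1).choose S.card) : ℝ) * secondDiff u S i j

lemma count_take_append (k : ℕ) (l : List ℕ) (a : ℕ) (m : ℕ → Bool) :
    ((l ++ [a]).take k).countP m
      = (l.take k).countP m + if l.length < k ∧ m a then 1 else 0 := by
  rw [List.take_append, List.countP_append]
  by_cases h : l.length < k
  · rw [List.take_of_length_le (by omega)]
    have h1 : List.take (k - l.length) [a] = [a] := List.take_of_length_le (by simp; omega)
    rw [h1]
    by_cases hm : m a <;> simp [hm, h, List.countP_cons]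
  · have h0 : k - l.length = 0 := by omega
    simp [h0, h]

lemma secondDiff_knn (k : ℕ) (m : ℕ → Bool) (S : Finset ℕ) (i j : ℕ)
    (hij : i < j) (hS : ∀ x ∈ S, x < i) :
    secondDiff (knnVal k m) S i j
      = if S.card + 1 = k ∧ m j then -(1 / (k : ℝ)) else 0 := by
  have hSj : ∀ x ∈ S, x < j := fun x hx => (hS x hx).trans hij
  have h1 : (S ∪ {i}).sort (· ≤ ·) = S.sort (· ≤ ·) ++ [i] := sort_union_max S i hS
  have h2 : (S ∪ {j}).sort (· ≤ ·) = S.sort (· ≤ ·) ++ [j] := sort_union_max S j hSj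
  have hset : S ∪ {i, j} = (S ∪ {i}) ∪ {j} := by ext x; simp
  have h3 : (S ∪ {i, j}).sort (· ≤ ·) = (S.sort (· ≤ ·) ++ [i]) ++ [j] := by
    rw [hset, sort_union_max _ j (by intro x hx; simp at hx; rcases hx with hx | hx
                                     · omega
                                     · exact (hS x hx).trans hij), h1]
  have hlen : (S.sort (· ≤ ·)).length = S.card := Finset.length_sort _
  have hlen2 : (S.sort (· ≤ ·) ++ [i]).length = S.card + 1 := by simp [hlen]
  unfold secondDiff knnVal
  rw [h1, h2, h3, count_take_append, count_take_append, count_take_append, hlen, hlen2]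
  push_cast
  rcases hmj : m j with _ | _ <;> rcases hmi : m i with _ | _ <;>
    simp only [hmj, hmi, Bool.false_eq_true, and_false, and_true, if_false, if_true] <;>
    (try split_ifs) <;> first | ring1 | (exfalso; omega)

theorem sti_knn_last_term (n k : ℕ) (m : ℕ → Bool)
    (hk : 1 ≤ k) (hkn : k ≤ n) (hn : 2 ≤ n) :
    sti n (knnVal k m) (n - 1) n =
      -(2 * ((n : ℝ) - k) / ((n : ℝ) * ((n : ℝ) - 1))) *
        ((if m n then (1 : ℝ) else 0) / k) := by
  have hground : (Finset.Icc 1 n) \ {n - 1, n} = Finset.Icc 1 (n - 2) := by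
    ext x; simp [Finset.mem_Icc]; omega
  unfold sti
  rw [hground]
  have hsum : ∀ S ∈ (Finset.Icc 1 (n - 2)).powerset,
      (1 / ((n - 1).choose S.card) : ℝ) * secondDiff (knnVal k m) S (n - 1) n
        = if S.card = k - 1 ∧ m n then
            -(1 / (((n - 1).choose (k - 1) : ℝ) * k)) else 0 := by
    intro S hS
    rw [Finset.mem_powerset] at hS
    have hbound : ∀ x ∈ S, x < n - 1 := by
      intro x hx
      have := hS hx
      rw [Finset.mem_Icc] at this
      omega
    rw [secondDiff_knn k m S (n - 1) n (by omega) hbound]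
    by_cases hc : S.card + 1 = k ∧ m n = true
    · obtain ⟨hc1, hc2⟩ := hc
      have : S.card = k - 1 := by omega
      rw [if_pos ⟨hc1, hc2⟩, if_pos ⟨this, hc2⟩, this]
      field_simp
    · rw [if_neg hc, mul_zero, if_neg]
      intro ⟨h1, h2⟩
      exact hc ⟨by omega, h2⟩
  rw [Finset.sum_congr rfl hsum]
  rcases hmn : m n with _ | _
  · simp [hmn]
  · rw [if_pos rfl]
    simp only [hmn, and_true]
    rw [← Finset.sum_filter, ← Finset.powersetCard_eq_filter, Finset.sum_const,
      Finset.card_powersetCard, Nat.card_Icc]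
    have h2 : n - 2 + 1 - 1 = n - 2 := by omega
    rw [h2]
    have hc2 : ((n - 1).choose (k - 1) : ℝ) ≠ 0 := by
      have : 0 < (n - 1).choose (k - 1) := Nat.choose_pos (by omega)
      positivity
    have hid : ((n - 2).choose (k - 1) : ℝ) * ((n : ℝ) - 1)
        = ((n - 1).choose (k - 1) : ℝ) * ((n : ℝ) - k) := by
      have := Nat.choose_mul_succ_eq (n - 2) (k - 1)
      have e1 : n - 2 + 1 = n - 1 := by omega
      rw [e1] at this
      have e2 : n - 1 - (k - 1) = n - k := by omega
      rw [e2] at this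
      have h3 := congrArg (fun x : ℕ => (x : ℝ)) this
      push_cast at h3
      rw [Nat.cast_sub (by omega : 1 ≤ n), Nat.cast_sub hkn] at h3
      exact_mod_cast h3
    have hn0 : (n : ℝ) ≠ 0 := by
      have : (0 : ℝ) < n := by exact_mod_cast (by omega : 0 < n)
      linarith
    have hn1 : (n : ℝ) - 1 ≠ 0 := by
      have : (2 : ℝ) ≤ n := by exact_mod_cast hn
      linarith
    have hk0 : (k : ℝ) ≠ 0 := by
      have : (0 : ℝ) < k := by exact_mod_cast hk
      linarith
    rw [nsmul_eq_mul]
    field_simp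
    linear_combination (-1 : ℝ) * hid
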